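/- Let φ(x,t) = c(t)exp(-(1/2)xᵀΠ(t)x) with Π(t) symmetric differentiable and c(t) > 0 differentiable. Then φ satisfies ∂φ/∂t + (Ax)·∇φ + (1/2)∑ᵢⱼ(BBᵀ)ᵢⱼ ∂²φ/∂xᵢ∂xⱼ = (1/2)xᵀS(t)x·φ for all x if and only if -Π'(t) = AᵀΠ(t) + Π(t)A - Π(t)BBᵀΠ(t) + S(t) and c'(t) = (1/2)trace(BBᵀΠ(t))c(t). -/

import Mathlib

open Matrix


lemma updDeriv {n : ℕ} (x : Fin n → ℝ) (j i : Fin n) (s₀ : ℝ) :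
    HasDerivAt (fun s => Function.update x j s i) (if i = j then (1:ℝ) else 0) s₀ := by
  rcases eq_or_ne i j with h | h
  · subst h
    simpa [Function.update_apply] using hasDerivAt_id' (x := s₀)
  · simpa [Function.update_apply, h] using hasDerivAt_const s₀ (x i)

lemma updDeriv_quad {n : ℕ} (M : Matrix (Fin n) (Fin n) ℝ) (hM : Mᵀ = M)
    (x : Fin n → ℝ) (j : Fin n) :
    HasDerivAt (fun s => (Function.update x j s) ⬝ᵥ M.mulVec (Function.update x j s))
      (2 * M.mulVec x j) (x j) := by
  have key : HasDerivAt (fun s => ∑ i, ∑ k, (Function.update x j s i * M i k) * Function.update x j s k)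
      (∑ i, ∑ k, (((if i = j then (1:ℝ) else 0) * M i k) * x k
        + (x i * M i k) * (if k = j then (1:ℝ) else 0))) (x j) := by
    apply HasDerivAt.fun_sum; intro i _
    apply HasDerivAt.fun_sum; intro k _
    have h1 := ((updDeriv x j i (x j)).mul_const (M i k)).fun_mul (updDeriv x j k (x j))
    simpa [Function.update_eq_self] using h1
  have hfun : (fun s => (Function.update x j s) ⬝ᵥ M.mulVec (Function.update x j s))
      = fun s => ∑ i, ∑ k, (Function.update x j s i * M i k) * Function.update x j s k := by
    funext s
    simp [dotProduct, mulVec, Finset.mul_sum, mul_assoc]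
  rw [hfun]
  convert key using 1
  have hsym : ∀ i k, M i k = M k i := fun i k => by
    conv_lhs => rw [← hM]
    rfl
  simp only [ite_mul, mul_ite, one_mul, mul_one, zero_mul, mul_zero,
    Finset.sum_add_distrib, Finset.sum_ite_eq, Finset.sum_ite_eq', Finset.mem_univ, if_true]
  simp [mulVec, dotProduct, two_mul, Finset.sum_add_distrib]
  congr 1
  funext k
  rw [hsym k j]; ring

lemma updDeriv_mulVec {n : ℕ} (M : Matrix (Fin n) (Fin n) ℝ) (x : Fin n → ℝ) (i j : Fin n) :
    HasDerivAt (fun s => M.mulVec (Function.update x i s) j) (M j i) (x i) := by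
  have hfun : (fun s => M.mulVec (Function.update x i s) j)
      = fun s => ∑ k, M j k * Function.update x i s k := by
    funext s; simp [mulVec, dotProduct]
  rw [hfun]
  have key : HasDerivAt (fun s => ∑ k, M j k * Function.update x i s k)
      (∑ k, M j k * (if k = i then (1:ℝ) else 0)) (x i) := by
    apply HasDerivAt.fun_sum; intro k _
    exact (updDeriv x i k (x i)).const_mul (M j k)
  simpa [mul_ite, Finset.sum_ite_eq'] using key

lemma quadTimeDeriv {n : ℕ} (P P' : ℝ → Matrix (Fin n) (Fin n) ℝ) (t : ℝ)
    (h : ∀ i j, HasDerivAt (fun s => P s i j) (P' t i j) t) (x : Fin n → ℝ) :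
    HasDerivAt (fun s => x ⬝ᵥ (P s).mulVec x) (x ⬝ᵥ (P' t).mulVec x) t := by
  have hfun : (fun s => x ⬝ᵥ (P s).mulVec x)
      = fun s => ∑ i, ∑ j, x i * (P s i j * x j) := by
    funext s; simp [dotProduct, mulVec, Finset.mul_sum]
  have hres : x ⬝ᵥ (P' t).mulVec x = ∑ i, ∑ j, x i * (P' t i j * x j) := by
    simp [dotProduct, mulVec, Finset.mul_sum]
  rw [hfun, hres]
  apply HasDerivAt.fun_sum; intro i _
  apply HasDerivAt.fun_sum; intro j _
  exact ((h i j).mul_const (x j)).const_mul (x i)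

noncomputable def pdt {n : ℕ} (L : (Fin n → ℝ) → ℝ → ℝ) (x : Fin n → ℝ) (t : ℝ) : ℝ :=
  deriv (L x) t

noncomputable def pdx {n : ℕ} (i : Fin n) (L : (Fin n → ℝ) → ℝ → ℝ) (x : Fin n → ℝ) (t : ℝ) : ℝ :=
  deriv (fun s => L (Function.update x i s) t) (x i)

theorem stmt_11 (n m : ℕ) (hn : 0 < n) (hm : 0 < m)
    (A : Matrix (Fin n) (Fin n) ℝ) (B : Matrix (Fin n) (Fin m) ℝ)
    (S : ℝ → Matrix (Fin n) (Fin n) ℝ) (hScont : Continuous S) (hSsymm : ∀ t, (S t)ᵀ = S t)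
    (P P' : ℝ → Matrix (Fin n) (Fin n) ℝ)
    (hPsymm : ∀ t, (P t)ᵀ = P t)
    (hPderiv : ∀ t, ∀ i j, HasDerivAt (fun s => P s i j) (P' t i j) t)
    (c c' : ℝ → ℝ) (hcpos : ∀ t, 0 < c t)
    (hcderiv : ∀ t, HasDerivAt c (c' t) t)
    (φ : (Fin n → ℝ) → ℝ → ℝ)
    (hφ : ∀ x t, φ x t = c t * Real.exp (-(1/2) * (x ⬝ᵥ (P t).mulVec x)))
    (t : ℝ) :
    (∀ x : Fin n → ℝ,
      pdt φ x t + (∑ i, A.mulVec x i * pdx i φ x t)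
        + (1/2) * ∑ i, ∑ j, (B * Bᵀ) i j * pdx i (fun y s => pdx j φ y s) x t
      = (1/2) * (x ⬝ᵥ (S t).mulVec x) * φ x t)
    ↔ (-P' t = Aᵀ * P t + P t * A - P t * (B * Bᵀ) * P t + S t
        ∧ c' t = (1/2) * (B * Bᵀ * P t).trace * c t) := by
  set R : Matrix (Fin n) (Fin n) ℝ := B * Bᵀ with hR
  set Q : Matrix (Fin n) (Fin n) ℝ := P t with hQ
  have hQsymm : Qᵀ = Q := hPsymm t
  have hQs : ∀ i j, Q i j = Q j i := fun i j => by
    conv_lhs => rw [← hQsymm]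
    rfl
  set E : (Fin n → ℝ) → ℝ := fun x => Real.exp (-(1/2) * (x ⬝ᵥ Q.mulVec x)) with hE
  have hEpos : ∀ x, 0 < E x := fun x => Real.exp_pos _
  -- derivative of the exponential factor in direction i
  have hEderiv : ∀ (x : Fin n → ℝ) (i : Fin n),
      HasDerivAt (fun s => E (Function.update x i s)) (-(Q.mulVec x i) * E x) (x i) := by
    intro x i
    have h1 := ((updDeriv_quad Q hQsymm x i).const_mul (-(1/2))).exp
    simp only [Function.update_eq_self] at h1
    convert h1 using 1
    simp only [hE]
    ring
  -- pdt formula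
  have hpdt : ∀ x : Fin n → ℝ,
      pdt φ x t = (c' t - (1/2) * c t * (x ⬝ᵥ (P' t).mulVec x)) * E x := by
    intro x
    have h1 := quadTimeDeriv P P' t (hPderiv t) x
    have h2 := (h1.const_mul (-(1/2))).exp
    have h3 := (hcderiv t).fun_mul h2
    have hfun : (φ x) = fun s => c s * Real.exp (-(1/2) * (x ⬝ᵥ (P s).mulVec x)) :=
      funext fun s => hφ x s
    unfold pdt
    rw [hfun, h3.deriv]
    simp only [hE, hQ]
    ring
  -- pdx formula
  have hpdx : ∀ (x : Fin n → ℝ) (j : Fin n),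
      pdx j φ x t = -(c t * Q.mulVec x j) * E x := by
    intro x j
    have h1 := (hEderiv x j).const_mul (c t)
    have hfun : (fun s => φ (Function.update x j s) t) = fun s => c t * E (Function.update x j s) := by
      funext s; rw [hφ]
    unfold pdx
    rw [hfun, h1.deriv]
    ring
  -- second derivative formula
  have hpdx2 : ∀ (x : Fin n → ℝ) (i j : Fin n),
      pdx i (fun y s => pdx j φ y s) x t
        = c t * (Q.mulVec x i * Q.mulVec x j - Q i j) * E x := by
    intro x i j
    have hfun : (fun s => pdx j φ (Function.update x i s) t)
        = fun s => -(c t * Q.mulVec (Function.update x i s) j) * E (Function.update x i s) := by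
      funext s; rw [hpdx]
    have h1 : HasDerivAt (fun s => -(c t * Q.mulVec (Function.update x i s) j))
        (-(c t * Q j i)) (x i) := (((updDeriv_mulVec Q x i j).const_mul (c t))).neg
    have h2 := h1.fun_mul (hEderiv x i)
    have hrfl : pdx i (fun y s => pdx j φ y s) x t
        = deriv (fun s => pdx j φ (Function.update x i s) t) (x i) := rfl
    rw [hrfl, hfun, h2.deriv]
    simp only [Function.update_eq_self]
    rw [hQs j i]
    ring
  -- the key matrix
  set M : Matrix (Fin n) (Fin n) ℝ := -P' t - (Aᵀ * Q + Q * A - Q * R * Q + S t) with hM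
  -- sum identities
  have hsum1 : ∀ x : Fin n → ℝ, ∑ i, A.mulVec x i * Q.mulVec x i = x ⬝ᵥ (Aᵀ * Q).mulVec x := by
    intro x
    rw [← Matrix.mulVec_mulVec, Matrix.dotProduct_mulVec x Aᵀ, Matrix.vecMul_transpose]
    rfl
  have hsum1' : ∀ x : Fin n → ℝ, x ⬝ᵥ (Q * A).mulVec x = x ⬝ᵥ (Aᵀ * Q).mulVec x := by
    intro x
    rw [← Matrix.mulVec_mulVec, Matrix.dotProduct_mulVec x Q]
    conv_lhs => rw [← hQsymm]
    rw [Matrix.vecMul_transpose, dotProduct_comm, ← hsum1 x]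
    simp [dotProduct]
  have habs : ∀ v : Fin n → ℝ, v ⬝ᵥ R.mulVec v = ∑ i, ∑ j, R i j * (v i * v j) := by
    intro v
    simp only [dotProduct, mulVec, Finset.mul_sum]
    exact Finset.sum_congr rfl fun i _ => Finset.sum_congr rfl fun j _ => by ring
  have hsum2 : ∀ x : Fin n → ℝ,
      ∑ i, ∑ j, R i j * (Q.mulVec x i * Q.mulVec x j) = x ⬝ᵥ (Q * R * Q).mulVec x := by
    intro x
    have h0 : x ⬝ᵥ (Q * R * Q).mulVec x = (Q.mulVec x) ⬝ᵥ R.mulVec (Q.mulVec x) := by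
      rw [← Matrix.mulVec_mulVec, ← Matrix.mulVec_mulVec, Matrix.dotProduct_mulVec x Q]
      conv_lhs => rw [← hQsymm]
      rw [Matrix.vecMul_transpose, hQsymm]
    rw [h0, habs]
  have hsum3 : ∑ i, ∑ j, R i j * Q i j = (R * Q).trace := by
    have h0 : (R * Q).trace = ∑ i, ∑ j, R i j * Q j i := by
      simp [Matrix.trace, Matrix.mul_apply, Matrix.diag]
    rw [h0]
    exact Finset.sum_congr rfl fun i _ => Finset.sum_congr rfl fun j _ => by rw [hQs i j]
  have e1 : ∀ x : Fin n → ℝ,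
      ∑ i, A.mulVec x i * (-(c t * Q.mulVec x i) * E x)
        = (x ⬝ᵥ (Aᵀ * Q).mulVec x) * (-(c t) * E x) := by
    intro x
    rw [← hsum1 x, Finset.sum_mul]
    exact Finset.sum_congr rfl fun i _ => by ring
  have e2 : ∀ x : Fin n → ℝ,
      ∑ i, ∑ j, R i j * (c t * (Q.mulVec x i * Q.mulVec x j - Q i j) * E x)
        = (x ⬝ᵥ (Q * R * Q).mulVec x) * (c t * E x) - (R * Q).trace * (c t * E x) := by
    intro x
    rw [← hsum2 x, ← hsum3, Finset.sum_mul, Finset.sum_mul, ← Finset.sum_sub_distrib]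
    refine Finset.sum_congr rfl fun i _ => ?_
    rw [Finset.sum_mul, Finset.sum_mul, ← Finset.sum_sub_distrib]
    exact Finset.sum_congr rfl fun j _ => by ring
  have hMx : ∀ x : Fin n → ℝ, x ⬝ᵥ M.mulVec x
      = -(x ⬝ᵥ (P' t).mulVec x) - (2 * (x ⬝ᵥ (Aᵀ * Q).mulVec x)
        - (x ⬝ᵥ (Q * R * Q).mulVec x) + x ⬝ᵥ (S t).mulVec x) := by
    intro x
    simp only [hM, Matrix.sub_mulVec, Matrix.add_mulVec, Matrix.neg_mulVec,
      dotProduct_sub, dotProduct_add, dotProduct_neg]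
    rw [hsum1' x]
    ring
  have main : ∀ x : Fin n → ℝ,
      pdt φ x t + (∑ i, A.mulVec x i * pdx i φ x t)
        + (1/2) * ∑ i, ∑ j, R i j * pdx i (fun y s => pdx j φ y s) x t
        - (1/2) * (x ⬝ᵥ (S t).mulVec x) * φ x t
      = ((c' t - (1/2) * (R * Q).trace * c t) + (c t / 2) * (x ⬝ᵥ M.mulVec x)) * E x := by
    intro x
    rw [hpdt x, hφ x t]
    simp only [hpdx, hpdx2]
    rw [e1 x, e2 x, hMx x]
    ring
  have key : ∀ x : Fin n → ℝ,
      (pdt φ x t + (∑ i, A.mulVec x i * pdx i φ x t)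
        + (1/2) * ∑ i, ∑ j, R i j * pdx i (fun y s => pdx j φ y s) x t
        = (1/2) * (x ⬝ᵥ (S t).mulVec x) * φ x t)
      ↔ (c' t - (1/2) * (R * Q).trace * c t) + (c t / 2) * (x ⬝ᵥ M.mulVec x) = 0 := by
    intro x
    rw [← sub_eq_zero, main x, mul_eq_zero]
    simp [(hEpos x).ne']
  rw [forall_congr' key]
  constructor
  · intro h
    have hk : c' t - (1/2) * (R * Q).trace * c t = 0 := by
      have h0 := h 0
      simpa using h0
    have hc2 : c' t = (1/2) * (R * Q).trace * c t := by linarith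
    have hmx : ∀ x : Fin n → ℝ, x ⬝ᵥ M.mulVec x = 0 := by
      intro x
      have hx := h x
      rw [hk, zero_add, mul_eq_zero] at hx
      rcases hx with h' | h'
      · exact absurd h' (div_ne_zero (hcpos t).ne' two_ne_zero)
      · exact h'
    have hP'sym : ∀ i j, P' t i j = P' t j i := by
      intro i j
      have h1 := hPderiv t i j
      have h3 := hPderiv t j i
      have heq : (fun s => P s j i) = fun s => P s i j :=
        funext fun s => congrFun (congrFun (hPsymm s) i) j
      rw [heq] at h3
      exact h1.unique h3
    have hRsym : Rᵀ = R := by rw [hR, Matrix.transpose_mul, Matrix.transpose_transpose]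
    have hNsym : (Aᵀ * Q + Q * A - Q * R * Q + S t)ᵀ = Aᵀ * Q + Q * A - Q * R * Q + S t := by
      simp only [Matrix.transpose_add, Matrix.transpose_sub, Matrix.transpose_mul,
        Matrix.transpose_transpose, hQsymm, hRsym, hSsymm, Matrix.mul_assoc]
      abel
    have hMsym : ∀ i j, M i j = M j i := by
      intro i j
      simp only [hM, Matrix.sub_apply, Matrix.neg_apply]
      rw [hP'sym i j]
      congr 1
      conv_lhs => rw [← hNsym]
      rfl
    have hqf : ∀ a b : Fin n, Pi.single a (1:ℝ) ⬝ᵥ M.mulVec (Pi.single b 1) = M a b := by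
      intro a b
      simp [dotProduct, mulVec, Pi.single_apply, Finset.sum_ite_eq, mul_ite, ite_mul]
    have hM0 : M = 0 := by
      ext i j
      have hii := hmx (Pi.single i 1)
      have hjj := hmx (Pi.single j 1)
      have hij := hmx (Pi.single i 1 + Pi.single j 1)
      simp only [Matrix.mulVec_add, dotProduct_add, add_dotProduct, hqf] at hij hii hjj
      have hs := hMsym i j
      simp only [Matrix.zero_apply]
      linarith
    refine ⟨?_, hc2⟩
    have := hM.symm.trans hM0
    exact sub_eq_zero.mp this
  · rintro ⟨h1, h2⟩ x
    have hM0 : M = 0 := by rw [hM, h1, sub_self]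
    rw [hM0]
    simp only [Matrix.zero_mulVec, dotProduct_zero, mul_zero, add_zero]
    rw [h2]
    ring
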